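/- Let D be a division ring and (R, C) a solution of the non-commutative (2,2)-system with commutator C, i.e. R : ℤ → Dˣ, C ∈ Dˣ, C = R_{n+1}⁻¹ R_n R_{n+1} R_n⁻¹ and R_{n+1} C R_{n-1} = R_n² + 1 for all n ∈ ℤ. Then the quantity K_n := R_{n+1} R_n⁻¹ + R_{n+1}⁻¹ R_n⁻¹ + R_{n+1}⁻¹ R_n is independent of n: K_n = K_m for all n, m ∈ ℤ. -/

import Mathlib

/-- A solution of the non-commutative `(2,2)`-system with commutator `C`:
`C = R_{n+1}⁻¹ R_n R_{n+1} R_n⁻¹` and `R_{n+1} C R_{n-1} = R_n² + 1` for all `n ∈ ℤ`. -/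
def IsTwoTwoSolution {D : Type*} [DivisionRing D] (R : ℤ → Dˣ) (C : Dˣ) : Prop :=
  (∀ n : ℤ, (C : D) =
      (((R (n + 1))⁻¹ : Dˣ) : D) * (R n : D) * (R (n + 1) : D) * (((R n)⁻¹ : Dˣ) : D)) ∧
  (∀ n : ℤ, (R (n + 1) : D) * (C : D) * (R (n - 1) : D) = (R n : D) ^ 2 + 1)

private lemma twotwo_step {D : Type*} [DivisionRing D] (R : ℤ → Dˣ) (C : Dˣ)
    (h : IsTwoTwoSolution R C) (n : ℤ) :
      (R (n + 1 + 1) : D) * (((R (n + 1))⁻¹ : Dˣ) : D) +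
        (((R (n + 1 + 1))⁻¹ : Dˣ) : D) * (((R (n + 1))⁻¹ : Dˣ) : D) +
        (((R (n + 1 + 1))⁻¹ : Dˣ) : D) * (R (n + 1) : D) =
      (R (n + 1) : D) * (((R n)⁻¹ : Dˣ) : D) +
        (((R (n + 1))⁻¹ : Dˣ) : D) * (((R n)⁻¹ : Dˣ) : D) +
        (((R (n + 1))⁻¹ : Dˣ) : D) * (R n : D) := by
  obtain ⟨h1, h2⟩ := h
  have h2' := h2 (n + 1)
  rw [show n + 1 - 1 = n from by ring, h1 n] at h2'
  set a : D := (R n : D) with ha_def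
  set a' : D := (((R n)⁻¹ : Dˣ) : D) with ha'_def
  set b : D := (R (n + 1) : D) with hb_def
  set b' : D := (((R (n + 1))⁻¹ : Dˣ) : D) with hb'_def
  set e : D := (R (n + 1 + 1) : D) with he_def
  set e' : D := (((R (n + 1 + 1))⁻¹ : Dˣ) : D) with he'_def
  have haa' : a * a' = 1 := Units.mul_inv _
  have ha'a : a' * a = 1 := Units.inv_mul _
  have hbb' : b * b' = 1 := Units.mul_inv _
  have hb'b : b' * b = 1 := Units.inv_mul _
  have hee' : e * e' = 1 := Units.mul_inv _
  have he'e : e' * e = 1 := Units.inv_mul _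
  -- h2' : e * (b' * a * b * a') * a = b ^ 2 + 1
  have heq : e * b' * a * b = b ^ 2 + 1 := by
    rw [← h2']
    calc e * b' * a * b = e * (b' * a * b) * (a' * a) := by rw [ha'a]; noncomm_ring
      _ = e * (b' * a * b * a') * a := by noncomm_ring
  have he_eq : e = (b ^ 2 + 1) * b' * a' * b := by
    calc e = e * (b' * b) := by rw [hb'b, mul_one]
      _ = e * b' * (a * a') * b := by rw [haa']; noncomm_ring
      _ = e * b' * a * (b * b') * a' * b := by rw [hbb']; noncomm_ring
      _ = e * b' * a * b * b' * a' * b := by noncomm_ring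
      _ = (b ^ 2 + 1) * b' * a' * b := by rw [heq]
  have hbsq : (b ^ 2 + 1) * b' = b + b' := by
    have : b ^ 2 * b' = b := by
      rw [sq, mul_assoc, hbb', mul_one]
    rw [add_mul, this, one_mul]
  have T1 : e * b' = b * a' + b' * a' := by
    calc e * b' = (b ^ 2 + 1) * b' * a' * (b * b') := by rw [he_eq]; noncomm_ring
      _ = (b + b') * a' := by rw [hbb', mul_one, hbsq]
      _ = b * a' + b' * a' := by rw [add_mul]
  have T2 : e * (b' * a) = b + b' := by
    calc e * (b' * a) = (b ^ 2 + 1) * b' * a' * (b * b') * a := by rw [he_eq]; noncomm_ring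
      _ = (b ^ 2 + 1) * b' * (a' * a) := by rw [hbb', mul_one]; noncomm_ring
      _ = b + b' := by rw [ha'a, mul_one, hbsq]
  have T3 : e' * b' + e' * b = b' * a := by
    calc e' * b' + e' * b = e' * (b + b') := by rw [mul_add, add_comm]
      _ = e' * (e * (b' * a)) := by rw [T2]
      _ = e' * e * (b' * a) := by rw [mul_assoc]
      _ = b' * a := by rw [he'e, one_mul]
  rw [T1, add_assoc, T3]

/-- For the `(2,2)`-system, `K_n = R_{n+1} R_n⁻¹ + R_{n+1}⁻¹ R_n⁻¹ + R_{n+1}⁻¹ R_n`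
is a conserved quantity. -/
theorem twotwo_K_conserved {D : Type*} [DivisionRing D] (R : ℤ → Dˣ) (C : Dˣ)
    (h : IsTwoTwoSolution R C) :
    ∀ n m : ℤ,
      (R (n + 1) : D) * (((R n)⁻¹ : Dˣ) : D) +
        (((R (n + 1))⁻¹ : Dˣ) : D) * (((R n)⁻¹ : Dˣ) : D) +
        (((R (n + 1))⁻¹ : Dˣ) : D) * (R n : D) =
      (R (m + 1) : D) * (((R m)⁻¹ : Dˣ) : D) +
        (((R (m + 1))⁻¹ : Dˣ) : D) * (((R m)⁻¹ : Dˣ) : D) +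
        (((R (m + 1))⁻¹ : Dˣ) : D) * (R m : D) := by
  set K : ℤ → D := fun n =>
    (R (n + 1) : D) * (((R n)⁻¹ : Dˣ) : D) +
      (((R (n + 1))⁻¹ : Dˣ) : D) * (((R n)⁻¹ : Dˣ) : D) +
      (((R (n + 1))⁻¹ : Dˣ) : D) * (R n : D) with hK
  show ∀ n m : ℤ, K n = K m
  have step : ∀ n : ℤ, K (n + 1) = K n := fun n => twotwo_step R C h n
  have key : ∀ n : ℤ, K n = K 0 := by
    intro n
    induction n using Int.induction_on with
    | zero => rfl
    | succ k ih => rw [step k, ih]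
    | pred k ih =>
      have := step (-(k : ℤ) - 1)
      rw [show -(k : ℤ) - 1 + 1 = -k from by ring] at this
      rw [← this, ih]
  intro n m
  rw [key n, key m]
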